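/- Let σ* > 0 satisfy E[min(σ(V)/τ, 1)] = ϖ at τ = τ*, where σ : V → (0, ∞) with E[σ(V)²] < ∞. Then the minimum value min over feasible ρ of E[σ(V)²/ρ(V)] equals E[σ(V)·max(σ(V), τ*)]. -/

import Mathlib

open MeasureTheory

private lemma key_ineq (s τ r : ℝ) (hs : 0 < s) (hτ : 0 < τ) (h1 : 0 < r) (h2 : r ≤ 1) :
    s * max s τ + τ ^ 2 * min (s / τ) 1 ≤ s ^ 2 / r + τ ^ 2 * r := by
  have hd : s ^ 2 / r * r = s ^ 2 := div_mul_cancel₀ _ h1.ne'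
  rcases le_total τ s with h | h
  · rw [max_eq_left h, min_eq_right ((one_le_div hτ).2 h)]
    nlinarith [hd, mul_nonneg (show (0:ℝ) ≤ s^2 - τ^2*r by nlinarith)
      (sub_nonneg.2 h2), h1]
  · rw [max_eq_right h, min_eq_left (by rw [div_le_one hτ]; exact h)]
    have hd2 : τ ^ 2 * (s / τ) = τ * s := by field_simp
    nlinarith [hd, hd2, sq_nonneg (s - τ * r), h1, mul_nonneg (sq_nonneg (s - τ * r)) h1.le]

private lemma eq_opt (s τ : ℝ) (hs : 0 < s) (hτ : 0 < τ) :
    s * max s τ = s ^ 2 / min (s / τ) 1 := by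
  rcases le_total τ s with h | h
  · rw [max_eq_left h, min_eq_right ((one_le_div hτ).2 h), div_one, sq]
  · rw [max_eq_right h, min_eq_left (by rw [div_le_one hτ]; exact h)]
    field_simp

theorem stmt6 {Ω α : Type*} [MeasurableSpace Ω] [MeasurableSpace α]
    (μ : Measure Ω) [IsProbabilityMeasure μ]
    (V : Ω → α) (hV : Measurable V) (σ : α → ℝ) (hσm : Measurable σ)
    (hσpos : ∀ v, 0 < σ v)
    (hσ2 : ∫⁻ ω, ENNReal.ofReal ((σ (V ω)) ^ 2) ∂μ < ⊤)
    (ϖ : ℝ) (hϖ : ϖ ∈ Set.Ioc (0 : ℝ) 1) (τs : ℝ) (hτ : 0 < τs)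
    (hbudget : ∫ ω, min (σ (V ω) / τs) 1 ∂μ = ϖ) :
    IsLeast
      {x : ENNReal | ∃ ρ : α → ℝ, Measurable ρ ∧ (∀ v, ρ v ∈ Set.Ioc (0 : ℝ) 1) ∧
        (∫ ω, ρ (V ω) ∂μ) ≤ ϖ ∧
        x = ∫⁻ ω, ENNReal.ofReal ((σ (V ω)) ^ 2 / ρ (V ω)) ∂μ}
      (∫⁻ ω, ENNReal.ofReal (σ (V ω) * max (σ (V ω)) τs) ∂μ) := by
  set ρs : α → ℝ := fun v => min (σ v / τs) 1 with hρs_def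
  have hρsm : Measurable ρs := (hσm.div_const _).min measurable_const
  have hρs01 : ∀ v, ρs v ∈ Set.Ioc (0 : ℝ) 1 :=
    fun v => ⟨lt_min (div_pos (hσpos v) hτ) one_pos, min_le_right _ _⟩
  constructor
  · refine ⟨ρs, hρsm, hρs01, hbudget.le, lintegral_congr fun ω => ?_⟩
    rw [eq_opt _ _ (hσpos (V ω)) hτ]
  · rintro x ⟨ρ, hρm, hρ01, hρb, rfl⟩
    have hint : ∀ (g : α → ℝ), Measurable g → (∀ v, g v ∈ Set.Ioc (0:ℝ) 1) →
        Integrable (fun ω => g (V ω)) μ := by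
      intro g hgm hg01
      refine (integrable_const (1:ℝ)).mono' ((hgm.comp hV).aestronglyMeasurable)
        (Filter.Eventually.of_forall fun ω => ?_)
      rw [Real.norm_eq_abs, abs_of_pos (hg01 _).1]
      exact (hg01 _).2
    have hb2 : ∫⁻ ω, ENNReal.ofReal (τs ^ 2 * ρ (V ω)) ∂μ
        ≤ ∫⁻ ω, ENNReal.ofReal (τs ^ 2 * ρs (V ω)) ∂μ := by
      rw [← ofReal_integral_eq_lintegral_ofReal ((hint ρ hρm hρ01).const_mul _)
        (Filter.Eventually.of_forall fun ω =>
          mul_nonneg (by positivity) (hρ01 _).1.le),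
        ← ofReal_integral_eq_lintegral_ofReal ((hint ρs hρsm hρs01).const_mul _)
        (Filter.Eventually.of_forall fun ω =>
          mul_nonneg (by positivity) (hρs01 _).1.le)]
      apply ENNReal.ofReal_le_ofReal
      rw [integral_const_mul, integral_const_mul]
      have : ∫ ω, ρs (V ω) ∂μ = ϖ := hbudget
      rw [this]
      exact mul_le_mul_of_nonneg_left hρb (by positivity)
    have hfin : ∫⁻ ω, ENNReal.ofReal (τs ^ 2 * ρ (V ω)) ∂μ ≠ ⊤ := by
      rw [← ofReal_integral_eq_lintegral_ofReal ((hint ρ hρm hρ01).const_mul _)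
        (Filter.Eventually.of_forall fun ω =>
          mul_nonneg (by positivity) (hρ01 _).1.le)]
      exact ENNReal.ofReal_ne_top
    have hm1 : Measurable fun ω => ENNReal.ofReal (σ (V ω) * max (σ (V ω)) τs) :=
      ((hσm.comp hV).mul ((hσm.comp hV).max measurable_const)).ennreal_ofReal
    have hm2 : Measurable fun ω => ENNReal.ofReal ((σ (V ω)) ^ 2 / ρ (V ω)) :=
      (((hσm.comp hV).pow_const 2).div (hρm.comp hV)).ennreal_ofReal
    rw [← ENNReal.add_le_add_iff_right hfin]
    calc (∫⁻ ω, ENNReal.ofReal (σ (V ω) * max (σ (V ω)) τs) ∂μ)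
          + ∫⁻ ω, ENNReal.ofReal (τs ^ 2 * ρ (V ω)) ∂μ
        ≤ (∫⁻ ω, ENNReal.ofReal (σ (V ω) * max (σ (V ω)) τs) ∂μ)
          + ∫⁻ ω, ENNReal.ofReal (τs ^ 2 * ρs (V ω)) ∂μ := by gcongr
      _ = ∫⁻ ω, (ENNReal.ofReal (σ (V ω) * max (σ (V ω)) τs)
          + ENNReal.ofReal (τs ^ 2 * ρs (V ω))) ∂μ := (lintegral_add_left hm1 _).symm
      _ ≤ ∫⁻ ω, ENNReal.ofReal ((σ (V ω)) ^ 2 / ρ (V ω) + τs ^ 2 * ρ (V ω)) ∂μ := by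
            apply lintegral_mono
            intro ω
            dsimp only
            rw [← ENNReal.ofReal_add
              (mul_nonneg (hσpos _).le (le_max_of_le_left (hσpos _).le))
              (mul_nonneg (by positivity) (hρs01 _).1.le)]
            exact ENNReal.ofReal_le_ofReal
              (key_ineq _ _ _ (hσpos (V ω)) hτ (hρ01 (V ω)).1 (hρ01 (V ω)).2)
      _ = (∫⁻ ω, ENNReal.ofReal ((σ (V ω)) ^ 2 / ρ (V ω)) ∂μ)
          + ∫⁻ ω, ENNReal.ofReal (τs ^ 2 * ρ (V ω)) ∂μ := by
            rw [← lintegral_add_left hm2]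
            refine lintegral_congr fun ω => ?_
            rw [← ENNReal.ofReal_add
              (div_nonneg (by positivity) (hρ01 (V ω)).1.le)
              (mul_nonneg (by positivity) (hρ01 _).1.le)]
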